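/- arXiv:1703.10145 — 2 statements merged into one kernel-verified Lean document; each statement's English description precedes it below -/
import Mathlib

section
/- Let (M̄, ḡ) be a Lorentzian manifold, M a null hypersurface of M̄, and ζ a rigging vector field for M (a vector field on a neighborhood of M with ζ_p ∉ T_pM for all p ∈ M). Define α = ḡ(ζ, ·), ω = i*α for the inclusion i : M → M̄, and g̃ = i*(ḡ + α ⊗ α). Then g̃ is a Riemannian (positive definite) metric on M. -/
/- STATEMENT 5: For a null hypersurface M of a Lorentzian manifold with a
rigging ζ, the tensor g̃ = i*(ḡ + α⊗α), α = ḡ(ζ,·), is a Riemannian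
(symmetric positive definite) metric on M. -/

open Manifold
noncomputable section

/-- A Lorentzian metric of signature (−,+,…,+): a symmetric bilinear form on
each tangent space possessing a timelike vector whose orthogonal complement is
positive definite. -/
structure LorentzMetric (E : Type*) [NormedAddCommGroup E] [NormedSpace ℝ E]
    (X : Type*) [TopologicalSpace X] [ChartedSpace E X] where
  g : ∀ x : X, TangentSpace (𝓘(ℝ, E)) x → TangentSpace (𝓘(ℝ, E)) x → ℝ
  symm : ∀ x u v, g x u v = g x v u
  add_left : ∀ x u u' v, g x (u + u') v = g x u v + g x u' v
  smul_left : ∀ x (a : ℝ) u v, g x (a • u) v = a * g x u v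
  lorentz : ∀ x, ∃ v, g x v v < 0 ∧ ∀ w, g x v w = 0 → w ≠ 0 → 0 < g x w w

variable {n : ℕ}
  {Mb : Type*} [TopologicalSpace Mb]
  [ChartedSpace (EuclideanSpace ℝ (Fin (n+2))) Mb]
  [IsManifold (𝓘(ℝ, EuclideanSpace ℝ (Fin (n+2)))) (⊤ : ℕ∞) Mb]
  {M : Type*} [TopologicalSpace M]
  [ChartedSpace (EuclideanSpace ℝ (Fin (n+1))) M]
  [IsManifold (𝓘(ℝ, EuclideanSpace ℝ (Fin (n+1)))) (⊤ : ℕ∞) M]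

/-- The differential of the inclusion `i : M → M̄` at `p`. -/
def dI (n : ℕ)
    {Mb : Type*} [TopologicalSpace Mb]
    [ChartedSpace (EuclideanSpace ℝ (Fin (n+2))) Mb]
    [IsManifold (𝓘(ℝ, EuclideanSpace ℝ (Fin (n+2)))) (⊤ : ℕ∞) Mb]
    {M : Type*} [TopologicalSpace M]
    [ChartedSpace (EuclideanSpace ℝ (Fin (n+1))) M]
    [IsManifold (𝓘(ℝ, EuclideanSpace ℝ (Fin (n+1)))) (⊤ : ℕ∞) M]
    (i : M → Mb) (p : M) :
    TangentSpace (𝓘(ℝ, EuclideanSpace ℝ (Fin (n+1)))) p →L[ℝ]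
      TangentSpace (𝓘(ℝ, EuclideanSpace ℝ (Fin (n+2)))) (i p) :=
  mfderiv (𝓘(ℝ, EuclideanSpace ℝ (Fin (n+1))))
    (𝓘(ℝ, EuclideanSpace ℝ (Fin (n+2)))) i p

/-- `i : M → M̄` is a (smooth immersed) hypersurface inclusion. -/
def IsHypersurfaceIncl (n : ℕ)
    {Mb : Type*} [TopologicalSpace Mb]
    [ChartedSpace (EuclideanSpace ℝ (Fin (n+2))) Mb]
    [IsManifold (𝓘(ℝ, EuclideanSpace ℝ (Fin (n+2)))) (⊤ : ℕ∞) Mb]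
    {M : Type*} [TopologicalSpace M]
    [ChartedSpace (EuclideanSpace ℝ (Fin (n+1))) M]
    [IsManifold (𝓘(ℝ, EuclideanSpace ℝ (Fin (n+1)))) (⊤ : ℕ∞) M]
    (i : M → Mb) : Prop :=
  ContMDiff (𝓘(ℝ, EuclideanSpace ℝ (Fin (n+1))))
      (𝓘(ℝ, EuclideanSpace ℝ (Fin (n+2)))) (⊤ : ℕ∞) i ∧
    Function.Injective i ∧ ∀ p : M, Function.Injective (dI n i p)

/-- `M` is a *null* hypersurface: at every point the induced metric on the
tangent space is degenerate. -/
def IsNullHypersurface (n : ℕ)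
    {Mb : Type*} [TopologicalSpace Mb]
    [ChartedSpace (EuclideanSpace ℝ (Fin (n+2))) Mb]
    [IsManifold (𝓘(ℝ, EuclideanSpace ℝ (Fin (n+2)))) (⊤ : ℕ∞) Mb]
    {M : Type*} [TopologicalSpace M]
    [ChartedSpace (EuclideanSpace ℝ (Fin (n+1))) M]
    [IsManifold (𝓘(ℝ, EuclideanSpace ℝ (Fin (n+1)))) (⊤ : ℕ∞) M]
    (gb : LorentzMetric (EuclideanSpace ℝ (Fin (n+2))) Mb)
    (i : M → Mb) : Prop :=
  ∀ p : M, ∃ u : TangentSpace (𝓘(ℝ, EuclideanSpace ℝ (Fin (n+1)))) p,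
    u ≠ 0 ∧ ∀ v, gb.g (i p) (dI n i p u) (dI n i p v) = 0

/-- A vector field `ζ` on the ambient manifold is a *rigging* for `M`:
it is everywhere transverse to `M`. -/
def IsRigging (n : ℕ)
    {Mb : Type*} [TopologicalSpace Mb]
    [ChartedSpace (EuclideanSpace ℝ (Fin (n+2))) Mb]
    [IsManifold (𝓘(ℝ, EuclideanSpace ℝ (Fin (n+2)))) (⊤ : ℕ∞) Mb]
    {M : Type*} [TopologicalSpace M]
    [ChartedSpace (EuclideanSpace ℝ (Fin (n+1))) M]
    [IsManifold (𝓘(ℝ, EuclideanSpace ℝ (Fin (n+1)))) (⊤ : ℕ∞) M]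
    (i : M → Mb)
    (ζ : ∀ x : Mb, TangentSpace (𝓘(ℝ, EuclideanSpace ℝ (Fin (n+2)))) x) : Prop :=
  ∀ p : M, ζ (i p) ∉ Set.range (dI n i p)

/-- The rigged tensor `g̃ = i*(ḡ + α ⊗ α)`, `α = ḡ(ζ,·)`. -/
def riggedMetric (n : ℕ)
    {Mb : Type*} [TopologicalSpace Mb]
    [ChartedSpace (EuclideanSpace ℝ (Fin (n+2))) Mb]
    [IsManifold (𝓘(ℝ, EuclideanSpace ℝ (Fin (n+2)))) (⊤ : ℕ∞) Mb]
    {M : Type*} [TopologicalSpace M]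
    [ChartedSpace (EuclideanSpace ℝ (Fin (n+1))) M]
    [IsManifold (𝓘(ℝ, EuclideanSpace ℝ (Fin (n+1)))) (⊤ : ℕ∞) M]
    (gb : LorentzMetric (EuclideanSpace ℝ (Fin (n+2))) Mb)
    (i : M → Mb)
    (ζ : ∀ x : Mb, TangentSpace (𝓘(ℝ, EuclideanSpace ℝ (Fin (n+2)))) x)
    (p : M) (u v : TangentSpace (𝓘(ℝ, EuclideanSpace ℝ (Fin (n+1)))) p) : ℝ :=
  gb.g (i p) (dI n i p u) (dI n i p v) +
    gb.g (i p) (ζ (i p)) (dI n i p u) * gb.g (i p) (ζ (i p)) (dI n i p v)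

lemma key_bilin {V : Type*} [AddCommGroup V] [Module ℝ V] [FiniteDimensional ℝ V]
    (B : V →ₗ[ℝ] V →ₗ[ℝ] ℝ) (hsymm : ∀ u v, B u v = B v u)
    (v : V) (hpos : ∀ w, B v w = 0 → w ≠ 0 → 0 < B w w)
    (W : Submodule ℝ V) (hW : Module.finrank ℝ W + 1 = Module.finrank ℝ V)
    (n₀ : V) (hn₀W : n₀ ∈ W) (hn₀ne : n₀ ≠ 0) (hn₀ : ∀ w ∈ W, B n₀ w = 0)
    (z : V) (hz : z ∉ W)
    (x : V) (hxW : x ∈ W) (hxne : x ≠ 0) :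
    0 < B x x + B z x * B z x := by
  have hn₀n₀ : B n₀ n₀ = 0 := hn₀ n₀ hn₀W
  have hn₀v : B v n₀ ≠ 0 := by
    intro h
    have := hpos n₀ h hn₀ne
    rw [hn₀n₀] at this; exact lt_irrefl 0 this
  have hn₀x : B n₀ x = 0 := hn₀ x hxW
  set a : ℝ := B v x / B v n₀ with ha
  set y : V := x - a • n₀ with hy
  have hyv : B v y = 0 := by
    simp only [hy, map_sub, map_smul, smul_eq_mul, ha]
    field_simp
    ring
  have hn₀y : B n₀ y = 0 := by
    simp only [hy, map_sub, map_smul, smul_eq_mul, hn₀x, hn₀n₀]; ring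
  by_cases hy0 : y = 0
  · -- x = a • n₀
    have hx : x = a • n₀ := by
      have := hy0; rw [hy, sub_eq_zero] at this; exact this
    have hane : a ≠ 0 := by
      intro h; rw [h, zero_smul] at hx; exact hxne hx
    have hzn₀ : B n₀ z ≠ 0 := by
      intro h
      apply hz
      have hBn₀ : (B n₀ : V →ₗ[ℝ] ℝ) ≠ 0 := by
        intro h0
        apply hn₀v
        rw [hsymm v n₀, h0]; rfl
      have hle : W ≤ LinearMap.ker (B n₀) := fun w hw => by
        simpa using hn₀ w hw
      have heq : W = LinearMap.ker (B n₀) := by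
        apply Submodule.eq_of_le_of_finrank_eq hle
        have h1 := Module.Dual.finrank_ker_add_one_of_ne_zero hBn₀
        omega
      rw [heq]; simpa using h
    have hBxx : B x x = 0 := by
      rw [hx]; simp [hn₀n₀]
    have hBzx : B z x = a * B z n₀ := by
      rw [hx]; simp [mul_comm]
    rw [hBxx, hBzx, hsymm z n₀]
    have h1 : a * B n₀ z ≠ 0 := mul_ne_zero hane hzn₀
    have h2 := mul_self_pos.mpr h1
    linarith
  · have hyy : 0 < B y y := hpos y hyv hy0
    have hxx : B x x = B y y := by
      have hx : x = y + a • n₀ := by rw [hy]; abel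
      rw [hx]
      simp only [map_add, map_smul, LinearMap.add_apply, LinearMap.smul_apply, smul_eq_mul,
        hn₀n₀, hn₀y, hsymm y n₀]
      ring
    nlinarith [mul_self_nonneg (B z x)]


theorem riggedMetric_isRiemannian
    (gb : LorentzMetric (EuclideanSpace ℝ (Fin (n+2))) Mb)
    (i : M → Mb) (hi : IsHypersurfaceIncl n i)
    (hnull : IsNullHypersurface n gb i)
    (ζ : ∀ x : Mb, TangentSpace (𝓘(ℝ, EuclideanSpace ℝ (Fin (n+2)))) x)
    (hζ : IsRigging n i ζ) :
    (∀ (p : M) (u v), riggedMetric n gb i ζ p u v = riggedMetric n gb i ζ p v u) ∧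
    (∀ (p : M) (u), u ≠ 0 → 0 < riggedMetric n gb i ζ p u u) := by
  constructor
  · intro p u v
    simp only [riggedMetric]
    rw [gb.symm (i p) (dI n i p u) (dI n i p v)]
    ring
  · intro p u hu
    obtain ⟨-, -, hdinj⟩ := hi
    set q := i p with hq
    set D := dI n i p with hD
    obtain ⟨v, hvv, hvpos⟩ := gb.lorentz q
    let V := EuclideanSpace ℝ (Fin (n+2))
    let B : V →ₗ[ℝ] V →ₗ[ℝ] ℝ :=
      LinearMap.mk₂ ℝ (gb.g q) (gb.add_left q)
        (fun a m n' => by exact gb.smul_left q a m n')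
        (fun m n₁ n₂ => by
          exact (gb.symm q m (n₁ + n₂)).trans ((gb.add_left q n₁ n₂ m).trans (by rw [gb.symm q n₁ m, gb.symm q n₂ m])))
        (fun a m n' => by
          exact (gb.symm q m (a • n')).trans ((gb.smul_left q a n' m).trans (by rw [gb.symm q n' m]; rfl)))
    have hBsymm : ∀ a b : V, B a b = B b a := fun a b => gb.symm q a b
    let W : Submodule ℝ V := LinearMap.range ((dI n i p).toLinearMap)
    have hmem : ∀ w : V, w ∈ W ↔ ∃ y, D y = w := fun w => by
      constructor
      · rintro ⟨y, rfl⟩; exact ⟨y, rfl⟩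
      · rintro ⟨y, rfl⟩; exact ⟨y, rfl⟩
    have hWrank : Module.finrank ℝ W + 1 = Module.finrank ℝ V := by
      have h1 : Module.finrank ℝ W = n + 1 := by
        show Module.finrank ℝ (LinearMap.range ((dI n i p).toLinearMap)) = n + 1
        rw [LinearMap.finrank_range_of_inj (hdinj p)]
        exact finrank_euclideanSpace_fin
      have h2 : Module.finrank ℝ V = n + 2 := finrank_euclideanSpace_fin
      omega
    obtain ⟨u₀, hu₀ne, hu₀⟩ := hnull p
    have hn₀ne : D u₀ ≠ 0 := by
      intro h
      apply hu₀ne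
      apply hdinj p
      rw [h, map_zero]
    have hn₀W : D u₀ ∈ W := (hmem _).2 ⟨u₀, rfl⟩
    have hn₀ : ∀ w ∈ W, B (D u₀) w = 0 := by
      intro w hw
      obtain ⟨y, rfl⟩ := (hmem w).1 hw
      exact hu₀ y
    have hz : ζ q ∉ W := by
      intro h
      obtain ⟨y, hy⟩ := (hmem _).1 h
      exact hζ p ⟨y, hy⟩
    have hxW : D u ∈ W := (hmem _).2 ⟨u, rfl⟩
    have hxne : D u ≠ 0 := by
      intro h
      apply hu
      apply hdinj p
      rw [h, map_zero]
    have := key_bilin B hBsymm v hvpos W hWrank (D u₀) hn₀W hn₀ne hn₀ (ζ q) hz (D u) hxW hxne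
    exact this
end
end

section
/- Let (M̄, ḡ) be a Lorentzian manifold carrying a closed timelike vector field. Then every compact null hypersurface M ⊆ M̄ has nontrivial first De Rham cohomology H¹(M, ℝ); in particular M is not simply connected. -/
/- STATEMENT 10: If a Lorentzian manifold carries a closed timelike vector
field, then every compact null hypersurface M has nontrivial H¹(M,ℝ); in
particular M is not simply connected. -/

open Manifold
noncomputable section

variable {n : ℕ}
  {Mb : Type*} [TopologicalSpace Mb]
  [ChartedSpace (EuclideanSpace ℝ (Fin (n+2))) Mb]
  [IsManifold (𝓘(ℝ, EuclideanSpace ℝ (Fin (n+2)))) (⊤ : ℕ∞) Mb]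
  {M : Type*} [TopologicalSpace M]
  [ChartedSpace (EuclideanSpace ℝ (Fin (n+1))) M]
  [IsManifold (𝓘(ℝ, EuclideanSpace ℝ (Fin (n+1)))) (⊤ : ℕ∞) M]

/-- The 1-form `α = ḡ(ζ,·)` is closed, i.e. locally exact. -/
def IsClosedRigging (n : ℕ)
    {Mb : Type*} [TopologicalSpace Mb]
    [ChartedSpace (EuclideanSpace ℝ (Fin (n+2))) Mb]
    [IsManifold (𝓘(ℝ, EuclideanSpace ℝ (Fin (n+2)))) (⊤ : ℕ∞) Mb]
    (gb : LorentzMetric (EuclideanSpace ℝ (Fin (n+2))) Mb)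
    (ζ : ∀ x : Mb, TangentSpace (𝓘(ℝ, EuclideanSpace ℝ (Fin (n+2)))) x) : Prop :=
  ∀ x : Mb, ∃ U : Set Mb, IsOpen U ∧ x ∈ U ∧ ∃ f : Mb → ℝ,
    ∀ y ∈ U, ∀ v, gb.g y (ζ y) v
      = mfderiv (𝓘(ℝ, EuclideanSpace ℝ (Fin (n+2)))) (𝓘(ℝ)) f y v

/-- A closed 1-form on `M` (local exactness characterization). -/
def IsClosedOneForm (n : ℕ)
    {M : Type*} [TopologicalSpace M]
    [ChartedSpace (EuclideanSpace ℝ (Fin (n+1))) M]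
    [IsManifold (𝓘(ℝ, EuclideanSpace ℝ (Fin (n+1)))) (⊤ : ℕ∞) M]
    (ω : ∀ p : M, TangentSpace (𝓘(ℝ, EuclideanSpace ℝ (Fin (n+1)))) p → ℝ) : Prop :=
  ∀ p : M, ∃ U : Set M, IsOpen U ∧ p ∈ U ∧ ∃ f : M → ℝ,
    ∀ q ∈ U, ∀ v, ω q v = mfderiv (𝓘(ℝ, EuclideanSpace ℝ (Fin (n+1)))) (𝓘(ℝ)) f q v

/-- An exact 1-form on `M`. -/
def IsExactOneForm (n : ℕ)
    {M : Type*} [TopologicalSpace M]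
    [ChartedSpace (EuclideanSpace ℝ (Fin (n+1))) M]
    [IsManifold (𝓘(ℝ, EuclideanSpace ℝ (Fin (n+1)))) (⊤ : ℕ∞) M]
    (ω : ∀ p : M, TangentSpace (𝓘(ℝ, EuclideanSpace ℝ (Fin (n+1)))) p → ℝ) : Prop :=
  ∃ f : M → ℝ, MDifferentiable (𝓘(ℝ, EuclideanSpace ℝ (Fin (n+1)))) (𝓘(ℝ)) f ∧
    ∀ (q : M) (v), ω q v = mfderiv (𝓘(ℝ, EuclideanSpace ℝ (Fin (n+1)))) (𝓘(ℝ)) f q v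


/- ====== auxiliary machinery ====== -/

namespace Mono10

open Filter Topology Set

variable {X : Type*} [TopologicalSpace X]

/-- A system of local potentials. -/
def Hdiff (pot : Set X → (X → ℝ) → Prop) : Prop :=
  ∀ U f V g, IsOpen U → IsOpen V → pot U f → pot V g → ∀ q ∈ U ∩ V,
    ∀ᶠ r in 𝓝 q, f r - g r = f q - g q

def Hloc (pot : Set X → (X → ℝ) → Prop) : Prop :=
  ∀ p : X, ∃ U f, IsOpen U ∧ p ∈ U ∧ pot U f

/-- A primitive along a map `γ : [0,1] → X`. -/
def Prim (pot : Set X → (X → ℝ) → Prop) (γ : unitInterval → X) (h : unitInterval → ℝ) : Prop :=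
  ∀ t : unitInterval, ∃ U f, IsOpen U ∧ pot U f ∧ γ t ∈ U ∧
    ∀ᶠ s in 𝓝 t, h s = f (γ s) + (h t - f (γ t))

variable {pot : Set X → (X → ℝ) → Prop}

theorem Prim.locallyConstant_sub (hd : Hdiff pot) {γ : unitInterval → X} (hγ : Continuous γ)
    {h₁ h₂ : unitInterval → ℝ} (H1 : Prim pot γ h₁) (H2 : Prim pot γ h₂) :
    h₁ 1 - h₂ 1 = h₁ 0 - h₂ 0 := by
  have hlc : IsLocallyConstant (fun s => h₁ s - h₂ s) := by
    rw [IsLocallyConstant.iff_eventually_eq]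
    intro t
    obtain ⟨U, f, hUo, hUp, hU, hev1⟩ := H1 t
    obtain ⟨V, g, hVo, hVp, hV, hev2⟩ := H2 t
    have hfg := hd U f V g hUo hVo hUp hVp (γ t) ⟨hU, hV⟩
    have hγt : ∀ᶠ s in 𝓝 t, f (γ s) - g (γ s) = f (γ t) - g (γ t) :=
      (hγ.continuousAt : ContinuousAt γ t).eventually hfg
    filter_upwards [hev1, hev2, hγt] with s e1 e2 e3
    rw [e1, e2]; linarith
  exact hlc.apply_eq_of_preconnectedSpace 1 0


noncomputable def T (x : ℝ) : unitInterval := Set.projIcc 0 1 zero_le_one x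

lemma T_coe {x : ℝ} (h0 : 0 ≤ x) (h1 : x ≤ 1) : ((T x : unitInterval) : ℝ) = x := by
  simp [T, Set.projIcc_of_mem zero_le_one ⟨h0, h1⟩]

noncomputable def gridC (γ : unitInterval → X) (f : ℕ → X → ℝ) (N : ℕ) : ℕ → ℝ
  | 0 => 0
  | k+1 => gridC γ f N k + f k (γ (T ((k+1) / N))) - f (k+1) (γ (T ((k+1) / N)))

noncomputable def gridK (N : ℕ) (s : unitInterval) : ℕ := min ⌊(s : ℝ) * N⌋₊ (N - 1)

noncomputable def gridH (γ : unitInterval → X) (f : ℕ → X → ℝ) (N : ℕ)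
    (s : unitInterval) : ℝ :=
  f (gridK N s) (γ s) + gridC γ f N (gridK N s)

variable {N : ℕ}

lemma gridK_lt (hN : 0 < N) (s : unitInterval) : gridK N s < N :=
  lt_of_le_of_lt (min_le_right _ _) (Nat.pred_lt hN.ne')

lemma gridK_le_mul (s : unitInterval) : (gridK N s : ℝ) ≤ (s : ℝ) * N := by
  calc (gridK N s : ℝ) ≤ (⌊(s : ℝ) * N⌋₊ : ℝ) := by exact_mod_cast Nat.cast_le.2 (min_le_left _ _)
    _ ≤ (s : ℝ) * N := Nat.floor_le (mul_nonneg s.2.1 (Nat.cast_nonneg N))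

lemma mul_le_gridK_add_one (hN : 0 < N) (s : unitInterval) :
    (s : ℝ) * N ≤ (gridK N s : ℝ) + 1 := by
  rcases le_or_gt ⌊(s : ℝ) * N⌋₊ (N - 1) with h | h
  · have : gridK N s = ⌊(s : ℝ) * N⌋₊ := min_eq_left h
    rw [this]
    exact le_of_lt (Nat.lt_floor_add_one _)
  · have hK : gridK N s = N - 1 := min_eq_right h.le
    have : ((N - 1 : ℕ) : ℝ) + 1 = (N : ℝ) := by
      have := Nat.succ_pred_eq_of_pos hN
      exact_mod_cast congrArg (Nat.cast (R := ℝ)) this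
    rw [hK, this]
    calc (s : ℝ) * N ≤ 1 * N := by
          apply mul_le_mul_of_nonneg_right s.2.2 (Nat.cast_nonneg N)
      _ = N := one_mul _
  
lemma gridK_zero (hN : 0 < N) : gridK N 0 = 0 := by
  simp [gridK]

lemma gridK_one (hN : 0 < N) : gridK N 1 = N - 1 := by
  have : ((1 : unitInterval) : ℝ) * N = (N : ℝ) := by norm_num
  rw [gridK, this]
  rw [Nat.floor_natCast]
  exact min_eq_right (Nat.sub_le _ _)

lemma gridK_eventually (hN : 0 < N) (t : unitInterval) :
    ∀ᶠ s in 𝓝 t, gridK N s = gridK N t ∨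
      (1 ≤ gridK N t ∧ (t : ℝ) * N = (gridK N t : ℝ) ∧ gridK N s = gridK N t - 1) := by
  set k := gridK N t with hk
  have hcont : Continuous fun s : unitInterval => (s : ℝ) * N :=
    continuous_subtype_val.mul continuous_const
  -- upper bound eventually
  have E1 : ∀ᶠ s in 𝓝 t, gridK N s ≤ k := by
    by_cases hkN : k = N - 1
    · exact Eventually.of_forall fun s => hkN ▸ min_le_right _ _
    · have hfl : k = ⌊(t : ℝ) * N⌋₊ := by
        have hmm : gridK N t = min ⌊(t : ℝ) * N⌋₊ (N - 1) := rfl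
        rcases min_cases ⌊(t : ℝ) * N⌋₊ (N - 1) with ⟨h1, _⟩ | ⟨h1, _⟩
        · exact hk.trans (hmm.trans h1)
        · exact absurd (hk.trans (hmm.trans h1)) hkN
      have hlt : (t : ℝ) * N < (k : ℝ) + 1 := by
        rw [hfl]; exact Nat.lt_floor_add_one _
      have : ∀ᶠ s : unitInterval in 𝓝 t, (s : ℝ) * N < (k : ℝ) + 1 :=
        (hcont.continuousAt : ContinuousAt _ t).eventually_lt continuousAt_const hlt
      filter_upwards [this] with s hs
      have : ⌊(s : ℝ) * N⌋₊ ≤ k := by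
        have h0 : (0:ℝ) ≤ (s : ℝ) * N := mul_nonneg s.2.1 (Nat.cast_nonneg N)
        have := (Nat.floor_lt h0).2 (by exact_mod_cast hs)
        omega
      exact le_trans (min_le_left _ _) this
  -- lower bound eventually
  have E2 : ∀ᶠ s in 𝓝 t, k ≤ gridK N s ∨
      (1 ≤ k ∧ (t : ℝ) * N = (k : ℝ) ∧ k - 1 ≤ gridK N s) := by
    rcases lt_or_eq_of_le (gridK_le_mul t) with hlt | heq
    · have : ∀ᶠ s : unitInterval in 𝓝 t, (k : ℝ) < (s : ℝ) * N :=
        continuousAt_const.eventually_lt (hcont.continuousAt : ContinuousAt _ t) hlt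
      filter_upwards [this] with s hs
      left
      have h1 : k ≤ ⌊(s : ℝ) * N⌋₊ := Nat.le_floor hs.le
      have h2 : k ≤ N - 1 := hk ▸ min_le_right _ _
      exact le_min h1 h2
    · by_cases hk1 : 1 ≤ k
      · have hlt : ((k - 1 : ℕ) : ℝ) < (t : ℝ) * N := by
          rw [← heq]
          have : ((k - 1 : ℕ) : ℝ) < (k : ℝ) := by
            have : k - 1 < k := Nat.sub_lt hk1 one_pos
            exact_mod_cast this
          exact this
        have : ∀ᶠ s : unitInterval in 𝓝 t, ((k - 1 : ℕ) : ℝ) < (s : ℝ) * N :=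
          continuousAt_const.eventually_lt (hcont.continuousAt : ContinuousAt _ t) hlt
        filter_upwards [this] with s hs
        right
        refine ⟨hk1, heq.symm, ?_⟩
        have h1 : k - 1 ≤ ⌊(s : ℝ) * N⌋₊ := Nat.le_floor hs.le
        have h2 : k - 1 ≤ N - 1 := le_trans (Nat.sub_le _ _) (hk ▸ min_le_right _ _)
        exact le_min h1 h2
      · exact Eventually.of_forall fun s => Or.inl (by omega)
  filter_upwards [E1, E2] with s h1 h2
  rcases h2 with h2 | ⟨ha, hb, hc⟩
  · exact Or.inl (le_antisymm h1 h2)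
  · rcases Nat.lt_or_ge (gridK N s) k with hlt | hge
    · exact Or.inr ⟨ha, hb, by omega⟩
    · exact Or.inl (le_antisymm h1 hge)


variable {γ : unitInterval → X} {f : ℕ → X → ℝ} {U : ℕ → Set X}

lemma gridH_zero (hN : 0 < N) : gridH γ f N 0 = f 0 (γ 0) := by
  rw [gridH, gridK_zero hN]; simp [gridC]

lemma gridH_one (hN : 0 < N) : gridH γ f N 1 = f (N-1) (γ 1) + gridC γ f N (N-1) := by
  rw [gridH, gridK_one hN]

lemma T_mem_block {k : ℕ} (hk : k + 1 ≤ N) :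
    ((T (((k:ℝ)+1) / N) : unitInterval) : ℝ) * N = (k : ℝ) + 1 := by
  have hN : (0:ℝ) < N := by exact_mod_cast Nat.pos_of_ne_zero (by omega)
  have h0 : (0:ℝ) ≤ ((k:ℝ)+1) / N := by positivity
  have h1 : ((k:ℝ)+1) / N ≤ 1 := by
    rw [div_le_one hN]; exact_mod_cast hk
  rw [T_coe h0 h1, div_mul_cancel₀]; exact hN.ne'

theorem prim_grid (hd : Hdiff pot) (hγ : Continuous γ) (hN : 0 < N)
    (hUo : ∀ k < N, IsOpen (U k)) (hpot : ∀ k < N, pot (U k) (f k))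
    (hcov : ∀ k < N, ∀ s : unitInterval, (k:ℝ) ≤ (s:ℝ) * N → (s:ℝ) * N ≤ (k:ℝ) + 1 → γ s ∈ U k) :
    Prim pot γ (gridH γ f N) := by
  intro t
  set k := gridK N t with hk
  have hkN : k < N := gridK_lt hN t
  have hmem : γ t ∈ U k := hcov k hkN t (gridK_le_mul t) (mul_le_gridK_add_one hN t)
  refine ⟨U k, f k, hUo k hkN, hpot k hkN, hmem, ?_⟩
  have hht : gridH γ f N t = f k (γ t) + gridC γ f N k := by rw [gridH, ← hk]
  by_cases hb : 1 ≤ k ∧ (t : ℝ) * N = (k : ℝ)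
  · obtain ⟨hb1, hb2⟩ := hb
    have hk1N : k - 1 < N := lt_of_le_of_lt (Nat.sub_le _ _) hkN
    have hcast : ((k - 1 : ℕ) : ℝ) = (k : ℝ) - 1 := by
      rw [Nat.cast_sub hb1]; norm_num
    have hmem' : γ t ∈ U (k-1) := by
      apply hcov (k-1) hk1N t
      · rw [hb2, hcast]; linarith
      · rw [hb2, hcast]; linarith
    have hdiffev := hd (U (k-1)) (f (k-1)) (U k) (f k) (hUo _ hk1N) (hUo _ hkN)
      (hpot _ hk1N) (hpot _ hkN) (γ t) ⟨hmem', hmem⟩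
    have hpull : ∀ᶠ s : unitInterval in 𝓝 t,
        f (k-1) (γ s) - f k (γ s) = f (k-1) (γ t) - f k (γ t) :=
      (hγ.continuousAt : ContinuousAt γ t).eventually hdiffev
    have hN' : (N:ℝ) ≠ 0 := by
      have : (0:ℝ) < N := by exact_mod_cast hN
      exact this.ne'
    have hTt : γ (T ((((k-1:ℕ):ℝ) + 1) / (N:ℝ))) = γ t := by
      congr 1
      apply Subtype.ext
      have h0 : (0:ℝ) ≤ (((k-1:ℕ):ℝ) + 1) / (N:ℝ) := by positivity
      have h1 : (((k-1:ℕ):ℝ) + 1) / (N:ℝ) ≤ 1 := by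
        rw [hcast, div_le_one (by exact_mod_cast hN : (0:ℝ) < N)]
        have : (k:ℝ) ≤ N := by exact_mod_cast hkN.le
        linarith
      rw [T_coe h0 h1, div_eq_iff hN', hcast, hb2]
      ring
    have hC : gridC γ f N k = gridC γ f N (k-1) + f (k-1) (γ t) - f k (γ t) := by
      conv_lhs => rw [← Nat.succ_pred_eq_of_pos hb1]
      simp only [gridC, Nat.pred_eq_sub_one]
      rw [hTt, Nat.sub_add_cancel hb1]
    filter_upwards [gridK_eventually hN t, hpull] with s hKs hfs
    rw [hht]
    rcases hKs with hKs | ⟨_, _, hKs⟩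
    · rw [gridH, hKs, ← hk]; ring
    · rw [gridH, hKs, ← hk, hC]
      linarith [hfs]
  · filter_upwards [gridK_eventually hN t] with s hKs
    rcases hKs with hKs | ⟨h1, h2, _⟩
    · rw [gridH, hKs, ← hk, hht]; ring
    · exact absurd ⟨h1, hk ▸ h2⟩ hb


theorem exists_grid (hloc : Hloc pot) {γ : unitInterval → X} (hγ : Continuous γ) :
    ∃ N, 0 < N ∧ ∃ (U : ℕ → Set X) (f : ℕ → X → ℝ),
      (∀ k < N, IsOpen (U k)) ∧ (∀ k < N, pot (U k) (f k)) ∧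
      ∀ k < N, ∀ s : unitInterval, (k:ℝ) ≤ (s:ℝ) * N → (s:ℝ) * N ≤ (k:ℝ) + 1 → γ s ∈ U k := by
  choose Ux fx hUo hmem hpot using hloc
  obtain ⟨δ, hδpos, hδ⟩ := lebesgue_number_lemma_of_metric (s := (univ : Set unitInterval))
    (c := fun x : X => γ ⁻¹' (Ux x)) isCompact_univ
    (fun x => (hUo x).preimage hγ)
    (fun s _ => Set.mem_iUnion.2 ⟨γ s, hmem (γ s)⟩)
  obtain ⟨n, hn⟩ := exists_nat_one_div_lt hδpos
  set N := n + 1 with hNdef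
  have hN : 0 < N := Nat.succ_pos n
  have hNR : (0:ℝ) < N := by exact_mod_cast hN
  have hpick : ∀ k : ℕ, ∃ x : X, Metric.ball (T ((k:ℝ) / N)) δ ⊆ γ ⁻¹' (Ux x) :=
    fun k => hδ _ (mem_univ _)
  choose xk hxk using hpick
  refine ⟨N, hN, fun k => Ux (xk k), fun k => fx (xk k),
    fun k _ => hUo _, fun k _ => hpot _, ?_⟩
  intro k hk s h1 h2
  apply hxk k
  have hkN : ((k:ℝ)) / N ∈ Set.Icc (0:ℝ) 1 := by
    constructor
    · positivity
    · rw [div_le_one hNR]; exact_mod_cast hk.le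
  have hTk : ((T ((k:ℝ) / N) : unitInterval) : ℝ) = (k:ℝ) / N := T_coe hkN.1 hkN.2
  rw [Metric.mem_ball, Subtype.dist_eq, Real.dist_eq, hTk]
  have habs : |(s:ℝ) - (k:ℝ)/N| ≤ 1 / N := by
    rw [abs_le]
    constructor
    · have hks : (k:ℝ)/N ≤ (s:ℝ) := by rw [div_le_iff₀ hNR]; exact h1
      have h1N : (0:ℝ) < 1/N := by positivity
      linarith
    · have : (s:ℝ) ≤ ((k:ℝ)+1)/N := by
        rw [le_div_iff₀ hNR]; linarith
      have h1N : (k:ℝ)/N + 1/N = ((k:ℝ)+1)/N := by ring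
      linarith
  have hNn : (N:ℝ) = (n:ℝ) + 1 := by rw [hNdef]; push_cast; ring
  calc |(s:ℝ) - (k:ℝ)/N| ≤ 1/N := habs
    _ = 1 / ((n:ℝ)+1) := by rw [hNn]
    _ < δ := hn

open scoped Classical in
/-- the index (integral) of the closed form along a curve -/
noncomputable def primIndex (pot : Set X → (X → ℝ) → Prop) (γ : unitInterval → X) : ℝ :=
  if h : ∃ h : unitInterval → ℝ, Prim pot γ h then h.choose 1 - h.choose 0 else 0

theorem prim_exists (hd : Hdiff pot) (hloc : Hloc pot) {γ : unitInterval → X}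
    (hγ : Continuous γ) : ∃ h : unitInterval → ℝ, Prim pot γ h := by
  obtain ⟨N, hN, U, f, hUo, hpot, hcov⟩ := exists_grid hloc hγ
  exact ⟨gridH γ f N, prim_grid hd hγ hN hUo hpot hcov⟩

theorem primIndex_eq (hd : Hdiff pot) {γ : unitInterval → X} (hγ : Continuous γ)
    {h : unitInterval → ℝ} (hh : Prim pot γ h) :
    primIndex pot γ = h 1 - h 0 := by
  have hex : ∃ h : unitInterval → ℝ, Prim pot γ h := ⟨h, hh⟩
  classical
  rw [primIndex, dif_pos hex]
  have := Prim.locallyConstant_sub hd hγ hex.choose_spec hh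
  linarith


theorem primIndex_trans (hd : Hdiff pot) (hloc : Hloc pot) {x y z : X}
    (γ : Path x y) (δ : Path y z) {U : Set X} {f : X → ℝ}
    (hUo : IsOpen U) (hpU : pot U f) (hδU : ∀ s, δ s ∈ U) :
    primIndex pot (γ.trans δ : unitInterval → X)
      = primIndex pot (γ : unitInterval → X) + (f z - f y) := by
  obtain ⟨h₁, hh₁⟩ := prim_exists hd hloc γ.continuous
  set σ : unitInterval → unitInterval := fun s => T (2 * (s:ℝ)) with hσdef
  set ρ : unitInterval → unitInterval := fun s => T (2 * (s:ℝ) - 1) with hρdef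
  have hσc : Continuous σ := continuous_projIcc.comp (by continuity)
  have hρc : Continuous ρ := continuous_projIcc.comp (by continuity)
  set h : unitInterval → ℝ := fun s =>
    if (s:ℝ) ≤ 1/2 then h₁ (σ s) else f (δ (ρ s)) + (h₁ 1 - f y) with hdef
  have htr : ∀ s : unitInterval,
      (γ.trans δ) s = if (s:ℝ) ≤ 1/2 then γ (σ s) else δ (ρ s) := by
    intro s
    rw [Path.trans_apply]
    split_ifs with hs
    · congr 1
      apply Subtype.ext
      exact (T_coe (by have := s.2.1; linarith) (by linarith)).symm
    · push_neg at hs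
      congr 1
      apply Subtype.ext
      have h2 : 2 * (s:ℝ) - 1 ≤ 1 := by have := s.2.2; linarith
      exact (T_coe (by linarith) h2).symm
  have hσhalf : ∀ s : unitInterval, (s:ℝ) ≤ 1/2 → ∀ u, h₁ u = f y → True := fun _ _ _ _ => trivial
  have hprim : Prim pot (γ.trans δ : unitInterval → X) h := by
    intro t
    rcases lt_trichotomy ((t:ℝ)) (1/2) with ht | ht | ht
    · -- left part
      obtain ⟨U', f', hU'o, hU'p, hU'mem, hev⟩ := hh₁ (σ t)
      have hpull : ∀ᶠ s : unitInterval in 𝓝 t,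
          h₁ (σ s) = f' (γ (σ s)) + (h₁ (σ t) - f' (γ (σ t))) :=
        (hσc.continuousAt : ContinuousAt σ t).eventually hev
      have hhalf : ∀ᶠ s : unitInterval in 𝓝 t, (s:ℝ) < 1/2 :=
        (continuous_subtype_val.continuousAt (x := t)).eventually_lt continuousAt_const ht
      refine ⟨U', f', hU'o, hU'p, ?_, ?_⟩
      · rw [htr t, if_pos ht.le]; exact hU'mem
      · filter_upwards [hpull, hhalf] with s hs1 hs2
        rw [hdef]
        simp only
        rw [if_pos hs2.le, if_pos ht.le, htr s, if_pos hs2.le, htr t, if_pos ht.le]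
        exact hs1
    · -- junction
      obtain ⟨U', f', hU'o, hU'p, hU'mem, hev⟩ := hh₁ 1
      have hσt : σ t = 1 := by
        apply Subtype.ext
        rw [hσdef]
        simp only
        rw [ht]
        norm_num [T_coe]
      have hρt : ρ t = 0 := by
        apply Subtype.ext
        rw [hρdef]
        simp only
        rw [ht]
        norm_num [T_coe]
      have hγ1 : γ 1 = y := γ.target
      have hδ0 : δ 0 = y := δ.source
      have hyU' : y ∈ U' := by rw [← hγ1]; exact hU'mem
      have hyU : y ∈ U := by rw [← hδ0]; exact hδU 0
      have hdiffev := hd U f U' f' hUo hU'o hpU hU'p y ⟨hyU, hyU'⟩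
      have hA : ∀ᶠ s : unitInterval in 𝓝 t,
          h₁ (σ s) = f' (γ (σ s)) + (h₁ 1 - f' (γ 1)) := by
        have hc : ContinuousAt σ t := hσc.continuousAt
        have hc' : Filter.Tendsto σ (𝓝 t) (𝓝 (1:unitInterval)) := hσt ▸ hc
        exact hc'.eventually hev
      have hB : ∀ᶠ s : unitInterval in 𝓝 t,
          f (δ (ρ s)) - f' (δ (ρ s)) = f y - f' y := by
        have hc : ContinuousAt (fun s => δ (ρ s)) t := (δ.continuous.comp hρc).continuousAt
        have heq : δ (ρ t) = y := by rw [hρt]; exact hδ0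
        have hc' : Filter.Tendsto (fun s => δ (ρ s)) (𝓝 t) (𝓝 y) := by
          have h2 : Filter.Tendsto (fun s => δ (ρ s)) (𝓝 t) (𝓝 (δ (ρ t))) := hc
          rwa [heq] at h2
        exact hc'.eventually hdiffev
      refine ⟨U', f', hU'o, hU'p, ?_, ?_⟩
      · rw [htr t, if_pos ht.le, hσt, hγ1]; exact hyU'
      · have hht : h t = h₁ 1 := by
          rw [hdef]; simp only; rw [if_pos ht.le, hσt]
        have htrt : (γ.trans δ) t = y := by rw [htr t, if_pos ht.le, hσt, hγ1]
        filter_upwards [hA, hB] with s hs1 hs2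
        rw [hht, htrt, htr s, hdef]
        simp only
        by_cases hs : (s:ℝ) ≤ 1/2
        · rw [if_pos hs, if_pos hs, hs1, hγ1]
        · rw [if_neg hs, if_neg hs]
          have : f (δ (ρ s)) = f' (δ (ρ s)) + (f y - f' y) := by linarith [hs2]
          rw [this]
          ring
    · -- right part
      have hmem : (γ.trans δ) t ∈ U := by rw [htr t, if_neg (not_le.2 ht)]; exact hδU _
      have hhalf : ∀ᶠ s : unitInterval in 𝓝 t, (1:ℝ)/2 < (s:ℝ) :=
        continuousAt_const.eventually_lt (continuous_subtype_val.continuousAt (x := t)) ht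
      refine ⟨U, f, hUo, hpU, hmem, ?_⟩
      filter_upwards [hhalf] with s hs
      rw [hdef]
      simp only
      rw [if_neg (not_le.2 hs), if_neg (not_le.2 ht), htr s, if_neg (not_le.2 hs),
        htr t, if_neg (not_le.2 ht)]
      ring
  have hval1 : h 1 = f z + (h₁ 1 - f y) := by
    rw [hdef]
    simp only
    rw [if_neg (by norm_num)]
    have : ρ 1 = 1 := by
      apply Subtype.ext
      rw [hρdef]; simp only
      norm_num [T_coe]
    rw [this, δ.target]
  have hval0 : h 0 = h₁ 0 := by
    rw [hdef]
    simp only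
    rw [if_pos (by norm_num)]
    have : σ 0 = 0 := by
      apply Subtype.ext
      rw [hσdef]; simp only
      norm_num [T_coe]
    rw [this]
  rw [primIndex_eq hd (γ.trans δ).continuous hprim, primIndex_eq hd γ.continuous hh₁,
    hval1, hval0]
  ring


theorem primIndex_homotopic (hd : Hdiff pot) (hloc : Hloc pot) {x y : X}
    (γ₀ γ₁ : Path x y) (hH : γ₀.Homotopic γ₁) :
    primIndex pot (γ₀ : unitInterval → X) = primIndex pot (γ₁ : unitInterval → X) := by
  obtain ⟨H⟩ := hH
  have hrow : ∀ t, Continuous fun s => H (t, s) :=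
    fun t => H.continuous.comp (continuous_const.prodMk continuous_id)
  have hJ : IsLocallyConstant fun t => primIndex pot (fun s => H (t, s)) := by
    rw [IsLocallyConstant.iff_eventually_eq]
    intro t0
    obtain ⟨N, hN, U, f, hUo, hpot, hcov⟩ := exists_grid hloc (hrow t0)
    have hcovev : ∀ᶠ t in 𝓝 t0, ∀ k < N, ∀ s : unitInterval,
        (k:ℝ) ≤ (s:ℝ) * N → (s:ℝ) * N ≤ (k:ℝ)+1 → H (t, s) ∈ U k := by
      have hmain := IsCompact.eventually_forall_of_forall_eventually
        (x₀ := t0) (K := (univ : Set unitInterval)) isCompact_univ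
        (P := fun t s => ∀ k ∈ Set.Iio N,
          (k:ℝ) ≤ (s:ℝ) * N → (s:ℝ) * N ≤ (k:ℝ)+1 → H (t, s) ∈ U k) ?_
      · exact hmain.mono fun t ht k hk s h1 h2 =>
          ht s (mem_univ s) k (Set.mem_Iio.2 hk) h1 h2
      · intro s _
        rw [eventually_all_finite (Set.finite_Iio N)]
        intro k hk
        by_cases hblock : (k:ℝ) ≤ (s:ℝ) * N ∧ (s:ℝ) * N ≤ (k:ℝ)+1
        · have hmem : H (t0, s) ∈ U k := hcov k (Set.mem_Iio.1 hk) s hblock.1 hblock.2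
          have hev : (fun z : unitInterval × unitInterval => H z) ⁻¹' (U k) ∈
              𝓝 ((t0, s) : unitInterval × unitInterval) :=
            H.continuous.continuousAt.preimage_mem_nhds
              ((hUo k (Set.mem_Iio.1 hk)).mem_nhds hmem)
          have hev' : ∀ᶠ z : unitInterval × unitInterval in 𝓝 (t0, s), H z ∈ U k := hev
          exact hev'.mono fun z hz _ _ => hz
        · have hφ : Continuous fun z : unitInterval × unitInterval => ((z.2 : ℝ) * N) :=
            (continuous_subtype_val.comp continuous_snd).mul continuous_const
          have hnot : ((s:ℝ) * N) ∈ (Set.Icc ((k:ℝ)) ((k:ℝ)+1))ᶜ := by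
            simp only [Set.mem_compl_iff, Set.mem_Icc]
            tauto
          have hev : (fun z : unitInterval × unitInterval => ((z.2:ℝ) * N)) ⁻¹'
              (Set.Icc ((k:ℝ)) ((k:ℝ)+1))ᶜ ∈ 𝓝 ((t0, s) : unitInterval × unitInterval) :=
            hφ.continuousAt.preimage_mem_nhds ((isClosed_Icc.isOpen_compl).mem_nhds hnot)
          have hev' : ∀ᶠ z : unitInterval × unitInterval in 𝓝 (t0, s),
              ((z.2:ℝ) * N) ∉ Set.Icc ((k:ℝ)) ((k:ℝ)+1) := hev
          exact hev'.mono fun z hz h1 h2 => absurd (Set.mem_Icc.2 ⟨h1, h2⟩) hz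
    have hCev : ∀ᶠ t in 𝓝 t0, ∀ m ∈ Set.Iio N,
        gridC (fun s => H (t, s)) f N m = gridC (fun s => H (t0, s)) f N m := by
      have hincr : ∀ᶠ t in 𝓝 t0, ∀ k ∈ Set.Iio (N-1),
          f k (H (t, T (((k:ℝ)+1)/N))) - f (k+1) (H (t, T (((k:ℝ)+1)/N)))
          = f k (H (t0, T (((k:ℝ)+1)/N))) - f (k+1) (H (t0, T (((k:ℝ)+1)/N))) := by
        rw [eventually_all_finite (Set.finite_Iio (N-1))]
        intro k hk
        have hkN : k < N - 1 := Set.mem_Iio.1 hk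
        have hk1 : k + 1 < N := by omega
        have hskN : ((T (((k:ℝ)+1)/N) : unitInterval) : ℝ) * N = (k:ℝ)+1 := by
          have : ((k:ℕ) + 1 : ℕ) ≤ N := by omega
          have h := T_mem_block (N := N) (k := k) (by omega)
          exact h
        have hq1 : H (t0, T (((k:ℝ)+1)/N)) ∈ U k :=
          hcov k (by omega) _ (by rw [hskN]; linarith) (by rw [hskN])
        have hq2 : H (t0, T (((k:ℝ)+1)/N)) ∈ U (k+1) := by
          apply hcov (k+1) hk1 _ (by rw [hskN]; push_cast; linarith)
          rw [hskN]; push_cast; linarith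
        have hdiffev := hd (U k) (f k) (U (k+1)) (f (k+1)) (hUo k (by omega))
          (hUo (k+1) hk1) (hpot k (by omega)) (hpot (k+1) hk1) _ ⟨hq1, hq2⟩
        have hc : Continuous fun t : unitInterval => H (t, T (((k:ℝ)+1)/N)) :=
          H.continuous.comp (continuous_id.prodMk continuous_const)
        exact (hc.continuousAt : ContinuousAt _ t0).eventually hdiffev
      filter_upwards [hincr] with t ht
      have key : ∀ m, m < N → gridC (fun s => H (t, s)) f N m
          = gridC (fun s => H (t0, s)) f N m := by
        intro m
        induction m with
        | zero => intro _; simp [gridC]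
        | succ m ih =>
          intro hmN
          simp only [gridC]
          have h1 := ih (by omega)
          have h2 := ht m (Set.mem_Iio.2 (by omega))
          linarith [h1, h2]
      exact fun m hm => key m (Set.mem_Iio.1 hm)
    filter_upwards [hcovev, hCev] with t hcovt hCt
    have h1 := primIndex_eq hd (hrow t) (prim_grid hd (hrow t) hN hUo hpot hcovt)
    have h2 := primIndex_eq hd (hrow t0) (prim_grid hd (hrow t0) hN hUo hpot hcov)
    show primIndex pot (fun s => H (t, s)) = primIndex pot (fun s => H (t0, s))
    rw [h1, h2, gridH_one hN, gridH_one hN, gridH_zero hN, gridH_zero hN]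
    simp only [Path.Homotopy.source, Path.Homotopy.target]
    rw [hCt (N-1) (Set.mem_Iio.2 (by omega))]
  have hkey := hJ.apply_eq_of_preconnectedSpace (0 : unitInterval) (1 : unitInterval)
  have e0 : (fun s => H (0, s)) = (γ₀ : unitInterval → X) :=
    funext fun s => H.apply_zero s
  have e1 : (fun s => H (1, s)) = (γ₁ : unitInterval → X) :=
    funext fun s => H.apply_one s
  rw [e0, e1] at hkey
  exact hkey


theorem exists_localMax_potential [CompactSpace X] [SimplyConnectedSpace X]
    (pot : Set X → (X → ℝ) → Prop)
    (hd : Hdiff pot) (hloc : Hloc pot)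
    (hcont : ∀ U f, IsOpen U → pot U f → ∀ q ∈ U, ContinuousAt f q)
    (hpc : ∀ U : Set X, IsOpen U → ∀ p ∈ U, ∃ V, IsOpen V ∧ p ∈ V ∧ V ⊆ U ∧
      ∀ q ∈ V, JoinedIn U p q) :
    ∃ (p : X) (U : Set X) (f : X → ℝ), IsOpen U ∧ p ∈ U ∧ pot U f ∧ IsLocalMax f p := by
  have hPC : PathConnectedSpace X := inferInstance
  obtain ⟨x₀⟩ : Nonempty X := hPC.nonempty
  set F : X → ℝ := fun q => primIndex pot (PathConnectedSpace.somePath x₀ q : unitInterval → X)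
    with hF
  have key : ∀ p U f, IsOpen U → p ∈ U → pot U f →
      ∀ᶠ q in 𝓝 p, F q = f q + (F p - f p) := by
    intro p U f hUo hpU hpot
    obtain ⟨V, hVo, hpV, hVU, hVj⟩ := hpc U hUo p hpU
    filter_upwards [hVo.mem_nhds hpV] with q hqV
    obtain ⟨δ, hδ⟩ := hVj q hqV
    have h1 : F q = primIndex pot ((PathConnectedSpace.somePath x₀ p).trans δ :
        unitInterval → X) :=
      primIndex_homotopic hd hloc _ _
        (SimplyConnectedSpace.paths_homotopic _ _)
    show F q = f q + (F p - f p)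
    rw [h1, primIndex_trans hd hloc _ δ hUo hpot hδ]
    have hFp : F p = primIndex pot (PathConnectedSpace.somePath x₀ p : unitInterval → X) := rfl
    rw [hFp]
    ring
  have hFcont : Continuous F := by
    rw [continuous_iff_continuousAt]
    intro p
    obtain ⟨U, f, hUo, hpU, hpot⟩ := hloc p
    have hfc : ContinuousAt (fun q => f q + (F p - f p)) p :=
      (hcont U f hUo hpot p hpU).add continuousAt_const
    apply hfc.congr
    filter_upwards [key p U f hUo hpU hpot] with q hq
    exact hq.symm
  obtain ⟨p0, -, hp0⟩ := isCompact_univ.exists_isMaxOn (Set.univ_nonempty)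
    hFcont.continuousOn
  obtain ⟨U, f, hUo, hpU, hpot⟩ := hloc p0
  refine ⟨p0, U, f, hUo, hpU, hpot, ?_⟩
  filter_upwards [key p0 U f hUo hpU hpot] with q hq
  have hFq : F q ≤ F p0 := hp0 (mem_univ q)
  linarith [hq]

end Mono10

namespace Man10

open Filter Topology Set

variable {E : Type*} [NormedAddCommGroup E] [NormedSpace ℝ E]
  {M : Type*} [TopologicalSpace M] [ChartedSpace E M]
  [IsManifold (𝓘(ℝ, E)) (⊤ : ℕ∞) M]

theorem isLocalMax_mfderiv_eq_zero {f : M → ℝ} {p : M}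
    (hf : MDifferentiableAt 𝓘(ℝ, E) 𝓘(ℝ) f p) (hmax : IsLocalMax f p) :
    mfderiv 𝓘(ℝ, E) 𝓘(ℝ) f p = 0 := by
  rw [hf.mfderiv]
  set e := extChartAt 𝓘(ℝ, E) p with he
  have hw : writtenInExtChartAt 𝓘(ℝ, E) 𝓘(ℝ) p f = f ∘ e.symm := by
    funext y
    simp [writtenInExtChartAt, extChartAt_model_space_eq_id, he, chartAt_self_eq]
  rw [hw, ModelWithCorners.range_eq_univ, fderivWithin_univ]
  have hmax' : IsLocalMax (f ∘ e.symm) (e p) := by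
    have hsymm : ContinuousAt e.symm (e p) := continuousAt_extChartAt_symm p
    have htend : Filter.Tendsto e.symm (𝓝 (e p)) (𝓝 p) := by
      have h2 : Filter.Tendsto e.symm (𝓝 (e p)) (𝓝 (e.symm (e p))) := hsymm
      rwa [extChartAt_to_inv] at h2
    have hev : ∀ᶠ y in 𝓝 (e p), f (e.symm y) ≤ f p := htend.eventually hmax
    have hval : (f ∘ e.symm) (e p) = f p := by
      simp only [Function.comp]
      rw [extChartAt_to_inv]
    rw [IsLocalMax, IsMaxFilter, hval]
    exact hev
  exact hmax'.fderiv_eq_zero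

theorem eventually_sub_const {f g : M → ℝ} {U : Set M} (hUo : IsOpen U)
    (hfd : ∀ q ∈ U, MDifferentiableAt 𝓘(ℝ, E) 𝓘(ℝ) f q)
    (hgd : ∀ q ∈ U, MDifferentiableAt 𝓘(ℝ, E) 𝓘(ℝ) g q)
    (heq : ∀ q ∈ U, mfderiv 𝓘(ℝ, E) 𝓘(ℝ) f q = mfderiv 𝓘(ℝ, E) 𝓘(ℝ) g q)
    {q₀ : M} (hq₀ : q₀ ∈ U) :
    ∀ᶠ r in 𝓝 q₀, f r - g r = f q₀ - g q₀ := by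
  set φ := f - g with hφ
  have hφd : ∀ q ∈ U, MDifferentiableAt 𝓘(ℝ, E) 𝓘(ℝ) φ q :=
    fun q hq => (hfd q hq).sub (hgd q hq)
  have hφ0 : ∀ q ∈ U, mfderiv 𝓘(ℝ, E) 𝓘(ℝ) φ q = 0 := fun q hq => by
    rw [hφ, mfderiv_sub (hfd q hq) (hgd q hq), heq q hq]; exact sub_self _
  set e := extChartAt 𝓘(ℝ, E) q₀ with he
  have hA : IsOpen (e.target ∩ e.symm ⁻¹' U) :=
    (continuousOn_extChartAt_symm q₀).isOpen_inter_preimage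
      (isOpen_extChartAt_target q₀) hUo
  have hmem : e q₀ ∈ e.target ∩ e.symm ⁻¹' U :=
    ⟨mem_extChartAt_target q₀, by
      rw [mem_preimage, extChartAt_to_inv]; exact hq₀⟩
  obtain ⟨r, hrpos, hball⟩ := Metric.isOpen_iff.1 hA _ hmem
  set B := Metric.ball (e q₀) r with hB
  have hBsub : B ⊆ e.target ∩ e.symm ⁻¹' U := hball
  have hsymmdiff : ∀ y ∈ B, MDifferentiableAt 𝓘(ℝ, E) 𝓘(ℝ, E) e.symm y := fun y hy =>
    (mdifferentiableOn_extChartAt_symm (x := q₀) y (hBsub hy).1).mdifferentiableAt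
      ((isOpen_extChartAt_target q₀).mem_nhds (hBsub hy).1)
  have hψd : ∀ y ∈ B, MDifferentiableAt 𝓘(ℝ, E) 𝓘(ℝ) (φ ∘ e.symm) y := fun y hy =>
    MDifferentiableAt.comp y (hφd _ (hBsub hy).2) (hsymmdiff y hy)
  have hψ0 : ∀ y ∈ B, fderiv ℝ (φ ∘ e.symm) y = 0 := by
    intro y hy
    have hcomp := mfderiv_comp y (hφd _ (hBsub hy).2) (hsymmdiff y hy)
    rw [← mfderiv_eq_fderiv, hcomp, hφ0 _ (hBsub hy).2]
    exact ContinuousLinearMap.zero_comp _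
  have hdiffOn : DifferentiableOn ℝ (φ ∘ e.symm) B := by
    intro y hy
    have := hψd y hy
    rw [mdifferentiableAt_iff_differentiableAt] at this
    exact this.differentiableWithinAt
  have hbound : ∀ y ∈ B, ‖fderivWithin ℝ (φ ∘ e.symm) B y‖ ≤ 0 := by
    intro y hy
    rw [fderivWithin_of_isOpen Metric.isOpen_ball hy, hψ0 y hy]
    simp
  have hconst : ∀ y ∈ B, (φ ∘ e.symm) y = (φ ∘ e.symm) (e q₀) := by
    intro y hy
    have h1 := (convex_ball (e q₀) r).norm_image_sub_le_of_norm_fderivWithin_le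
      hdiffOn hbound (Metric.mem_ball_self hrpos) hy
    rw [zero_mul] at h1
    have := norm_le_zero_iff.1 h1
    exact sub_eq_zero.1 this
  have hS : IsOpen (e.source ∩ e ⁻¹' B) :=
    (continuousOn_extChartAt q₀).isOpen_inter_preimage (isOpen_extChartAt_source q₀)
      Metric.isOpen_ball
  have hq₀S : q₀ ∈ e.source ∩ e ⁻¹' B :=
    ⟨mem_extChartAt_source q₀, by rw [mem_preimage]; exact Metric.mem_ball_self hrpos⟩
  filter_upwards [hS.mem_nhds hq₀S] with r' hr'
  have h1 : φ r' = (φ ∘ e.symm) (e r') := by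
    simp only [Function.comp_apply]
    rw [PartialEquiv.left_inv _ hr'.1]
  have h2 : (φ ∘ e.symm) (e q₀) = φ q₀ := by
    simp only [Function.comp_apply]
    rw [extChartAt_to_inv]
  have h3 := hconst (e r') hr'.2
  have : φ r' = φ q₀ := by rw [h1, h3, h2]
  simpa [hφ] using this

theorem exists_pathConn_nhd {E : Type*} [NormedAddCommGroup E] [NormedSpace ℝ E]
    {M : Type*} [TopologicalSpace M] [ChartedSpace E M]
    (U : Set M) (hU : IsOpen U) (p : M) (hp : p ∈ U) :
    ∃ V, IsOpen V ∧ p ∈ V ∧ V ⊆ U ∧ ∀ q ∈ V, JoinedIn U p q := by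
  set e := chartAt E p with he
  have hpe : p ∈ e.source := mem_chart_source E p
  have hA : IsOpen (e.target ∩ e.symm ⁻¹' U) := e.isOpen_inter_preimage_symm hU
  have hmem : e p ∈ e.target ∩ e.symm ⁻¹' U :=
    ⟨e.map_source hpe, by rw [mem_preimage, e.left_inv hpe]; exact hp⟩
  obtain ⟨r, hrpos, hball⟩ := Metric.isOpen_iff.1 hA _ hmem
  set B := Metric.ball (e p) r with hB
  refine ⟨e.source ∩ e ⁻¹' B, e.isOpen_inter_preimage Metric.isOpen_ball,
    ⟨hpe, by rw [mem_preimage]; exact Metric.mem_ball_self hrpos⟩, ?_, ?_⟩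
  · intro x hx
    have h2 := (hball hx.2).2
    rwa [mem_preimage, e.left_inv hx.1] at h2
  · intro q hq
    have hBpc : IsPathConnected B :=
      (convex_ball (e p) r).isPathConnected ⟨e p, Metric.mem_ball_self hrpos⟩
    have hJ : JoinedIn B (e p) (e q) :=
      hBpc.joinedIn _ (Metric.mem_ball_self hrpos) _ hq.2
    obtain ⟨γ, hγ⟩ := hJ
    have hcont : Continuous fun t => e.symm (γ t) :=
      e.continuousOn_symm.comp_continuous γ.continuous fun t => (hball (hγ t)).1
    refine ⟨⟨⟨fun t => e.symm (γ t), hcont⟩, ?_, ?_⟩, fun t => (hball (hγ t)).2⟩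
    · show e.symm (γ 0) = p
      rw [γ.source, e.left_inv hpe]
    · show e.symm (γ 1) = q
      rw [γ.target, e.left_inv hq.1]

end Man10

namespace Alg10

theorem lorentz_orth {V : Type*} [AddCommGroup V] [Module ℝ V] (g : V → V → ℝ)
    (symm : ∀ u v, g u v = g v u)
    (addl : ∀ u u' v, g (u + u') v = g u v + g u' v)
    (smull : ∀ (a : ℝ) u v, g (a • u) v = a * g u v)
    (hl : ∃ v, g v v < 0 ∧ ∀ w, g v w = 0 → w ≠ 0 → 0 < g w w)
    {z w : V} (hz : g z z < 0) (hw : g w w = 0) (hzw : g z w = 0) : w = 0 := by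
  have addr : ∀ u v v', g u (v + v') = g u v + g u v' := fun u v v' => by
    rw [symm, addl, symm v u, symm v' u]
  have smulr : ∀ (a : ℝ) u v, g u (a • v) = a * g u v := fun a u v => by
    rw [symm, smull, symm]
  have subl : ∀ u u' v, g (u - u') v = g u v - g u' v := fun u u' v => by
    have h := addl (u - u') u' v
    rw [sub_add_cancel] at h
    linarith
  have subr : ∀ u v v', g u (v - v') = g u v - g u v' := fun u v v' => by
    rw [symm, subl, symm v u, symm v' u]
  have expand : ∀ (x y : V) (b : ℝ),
      g (x - b • y) (x - b • y) = g x x - 2 * b * g x y + b ^ 2 * g y y := by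
    intro x y b
    rw [subl, subr, subr, smull, smulr, smull, smulr, symm y x]
    ring
  have gv_eq : ∀ (v x y : V) (b : ℝ), g v (x - b • y) = g v x - b * g v y :=
    fun v x y b => by rw [subr, smulr]
  have g0 : ∀ x : V, g 0 x = 0 := fun x => by
    have h := smull 0 x x
    rwa [zero_smul, zero_mul] at h
  obtain ⟨v, hv, hpos⟩ := hl
  have hvne : g v v ≠ 0 := ne_of_lt hv
  have hnonneg : ∀ u : V, g v u = 0 → 0 ≤ g u u := by
    intro u hu
    by_cases h0 : u = 0
    · subst h0; rw [g0]
    · exact (hpos u hu h0).le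
  set a := g z v / g v v with ha
  have haz : a * g v v = g z v := by rw [ha]; field_simp
  have hzorth : g v (z - a • v) = 0 := by
    rw [gv_eq, symm v z, haz]
    ring
  have hzz : g z z = a ^ 2 * g v v + g (z - a • v) (z - a • v) := by
    rw [expand z v a, ← haz]
    ring
  have hz'nonneg : 0 ≤ g (z - a • v) (z - a • v) := hnonneg _ hzorth
  have ha2 : a ^ 2 * g v v < 0 := by linarith
  have hane : a ≠ 0 := by
    intro h
    rw [h] at ha2
    norm_num at ha2
  set d := g w v / g v v with hd
  have hdw : d * g v v = g w v := by rw [hd]; field_simp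
  set b := d / a with hb
  have hvu : g v (w - b • z) = 0 := by
    rw [gv_eq, symm v w, ← hdw, symm v z, ← haz, hb]
    field_simp
    ring
  have hwz : g w z = 0 := by rw [symm]; exact hzw
  have huu : g (w - b • z) (w - b • z) = b ^ 2 * g z z := by
    rw [expand w z b, hw, hwz]
    ring
  have h1 : 0 ≤ b ^ 2 * g z z := huu ▸ hnonneg _ hvu
  have hb0 : b = 0 := by
    by_contra hbne
    have hb2 : 0 < b ^ 2 := by positivity
    nlinarith
  have hd0 : d = 0 := by
    rw [hb] at hb0
    field_simp [hane] at hb0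
    simpa using hb0
  have hvw : g v w = 0 := by rw [symm, ← hdw, hd0]; ring
  by_contra hwne
  have := hpos w hvw hwne
  linarith

end Alg10


theorem compact_null_hypersurface_H1_nontrivial
    [CompactSpace M] [Nonempty M]
    (gb : LorentzMetric (EuclideanSpace ℝ (Fin (n+2))) Mb)
    (i : M → Mb) (hi : IsHypersurfaceIncl n i)
    (hnull : IsNullHypersurface n gb i)
    (ζ : ∀ x : Mb, TangentSpace (𝓘(ℝ, EuclideanSpace ℝ (Fin (n+2)))) x)
    (htimelike : ∀ x : Mb, gb.g x (ζ x) (ζ x) < 0)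
    (hclosed : IsClosedRigging n gb ζ) :
    (∃ ω : ∀ p : M, TangentSpace (𝓘(ℝ, EuclideanSpace ℝ (Fin (n+1)))) p → ℝ,
        IsClosedOneForm n ω ∧ ¬ IsExactOneForm n ω) ∧
      ¬ SimplyConnectedSpace M := by
  classical
  -- the candidate closed one-form:  ω = i^* (ḡ(ζ, ·))
  set ω : ∀ p : M, TangentSpace (𝓘(ℝ, EuclideanSpace ℝ (Fin (n+1)))) p → ℝ :=
    fun p v => gb.g (i p) (ζ (i p)) (dI n i p v) with hω
  -- ω is nonvanishing (using the null direction and the Lorentz linear algebra)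
  have hne : ∀ p : M, ∃ u, ω p u ≠ 0 := by
    intro p
    obtain ⟨u, hu0, hunull⟩ := hnull p
    refine ⟨u, fun hcontra => ?_⟩
    have hw0 : dI n i p u = 0 :=
      Alg10.lorentz_orth (gb.g (i p)) (gb.symm (i p)) (gb.add_left (i p))
        (gb.smul_left (i p)) (gb.lorentz (i p)) (htimelike (i p)) (hunull u) hcontra
    exact hu0 (hi.2.2 p (by rw [hw0, map_zero]))
  -- closedness of ω
  have hclosed1 : IsClosedOneForm n ω := by
    intro p
    obtain ⟨U, hUo, hxU, f, hf⟩ := hclosed (i p)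
    have hicont : Continuous i := hi.1.continuous
    refine ⟨i ⁻¹' U, hUo.preimage hicont, hxU, f ∘ i, ?_⟩
    intro q hq v
    have hfd : MDifferentiableAt (𝓘(ℝ, EuclideanSpace ℝ (Fin (n+2)))) (𝓘(ℝ)) f (i q) := by
      by_contra hnd
      have h0 := mfderiv_zero_of_not_mdifferentiableAt hnd
      have h1 := hf (i q) hq (ζ (i q))
      rw [h0] at h1
      have h2 : gb.g (i q) (ζ (i q)) (ζ (i q)) = 0 := h1
      exact absurd h2 (htimelike (i q)).ne
    have hid : MDifferentiableAt (𝓘(ℝ, EuclideanSpace ℝ (Fin (n+1))))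
        (𝓘(ℝ, EuclideanSpace ℝ (Fin (n+2)))) i q :=
      (hi.1.mdifferentiable (by simp)) q
    have hcomp := mfderiv_comp q hfd hid
    calc ω q v = gb.g (i q) (ζ (i q)) (dI n i q v) := rfl
      _ = @id ℝ (mfderiv (𝓘(ℝ, EuclideanSpace ℝ (Fin (n+2)))) (𝓘(ℝ)) f (i q) (dI n i q v)) := by
          rw [hf (i q) hq]; rfl
      _ = @id ℝ (mfderiv (𝓘(ℝ, EuclideanSpace ℝ (Fin (n+1)))) (𝓘(ℝ)) (f ∘ i) q v) := by
          rw [hcomp]; rfl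
  -- ω is not exact
  have hnotexact : ¬ IsExactOneForm n ω := by
    rintro ⟨f, hfdiff, hf⟩
    have hfc : Continuous f := hfdiff.continuous
    obtain ⟨p0, -, hp0⟩ := isCompact_univ.exists_isMaxOn Set.univ_nonempty hfc.continuousOn
    have hmax : IsLocalMax f p0 :=
      Filter.Eventually.of_forall fun q => isMaxOn_iff.1 hp0 q (Set.mem_univ q)
    have h0 := Man10.isLocalMax_mfderiv_eq_zero (hfdiff p0) hmax
    obtain ⟨u, hu⟩ := hne p0
    apply hu
    rw [hf p0 u, h0]
    rfl
  -- M is not simply connected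
  have hnsc : ¬ SimplyConnectedSpace M := by
    intro hsc
    set pot : Set M → (M → ℝ) → Prop := fun U f =>
      ∀ q ∈ U, ∀ v, ω q v =
        mfderiv (𝓘(ℝ, EuclideanSpace ℝ (Fin (n+1)))) (𝓘(ℝ)) f q v with hpotdef
    have hpd : ∀ U f, IsOpen U → pot U f → ∀ q ∈ U,
        MDifferentiableAt (𝓘(ℝ, EuclideanSpace ℝ (Fin (n+1)))) (𝓘(ℝ)) f q := by
      intro U f hUo hp q hq
      by_contra hnd
      obtain ⟨u, hu⟩ := hne q
      apply hu
      rw [hp q hq u, mfderiv_zero_of_not_mdifferentiableAt hnd]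
      rfl
    have hd : Mono10.Hdiff pot := by
      intro U f V g hUo hVo hpf hpg q hq
      apply Man10.eventually_sub_const (hUo.inter hVo)
        (fun r hr => hpd U f hUo hpf r hr.1) (fun r hr => hpd V g hVo hpg r hr.2)
        (fun r hr => ?_) hq
      apply ContinuousLinearMap.ext
      intro v
      exact (hpf r hr.1 v).symm.trans (hpg r hr.2 v)
    have hloc : Mono10.Hloc pot := by
      intro p
      obtain ⟨U, hUo, hpU, f, hf⟩ := hclosed1 p
      exact ⟨U, f, hUo, hpU, fun q hq v => hf q hq v⟩
    have hcont : ∀ U f, IsOpen U → pot U f → ∀ q ∈ U, ContinuousAt f q :=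
      fun U f hUo hp q hq => (hpd U f hUo hp q hq).continuousAt
    obtain ⟨p0, U, f, hUo, hpU, hfp, hmax⟩ :=
      Mono10.exists_localMax_potential pot hd hloc hcont
        (fun U hU p hp => Man10.exists_pathConn_nhd (E := EuclideanSpace ℝ (Fin (n+1))) U hU p hp)
    obtain ⟨u, hu⟩ := hne p0
    apply hu
    have h0 := Man10.isLocalMax_mfderiv_eq_zero (hpd U f hUo hfp p0 hpU) hmax
    rw [hfp p0 hpU u, h0]
    rfl
  exact ⟨⟨ω, hclosed1, hnotexact⟩, hnsc⟩
end
end
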